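/- (Theorem 2, case ν = 2.) Let ν = 2 and let U(ω) = Σ_{ι=0}^{κ} U_ι ω^ι be a polynomial matrix all of whose coefficients U_ι are real 2×2 matrices. If U(ω)·D·U(ω)ᵀ = D identically in ω and U(0) = I, then U(ω) ≡ I. -/

import Mathlib

open Polynomial Matrix

noncomputable section

/-- Helper: if `a*a - b*b = 1` in `ℝ[X]`, then `a` and `b` are constants. -/
lemma const_of_sq_sub_sq (a b : Polynomial ℝ) (h : a * a - b * b = 1) :
    a = Polynomial.C (a.eval 0) ∧ b = Polynomial.C (b.eval 0) := by
  have h1 : (a + b) * (a - b) = 1 := by linear_combination h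
  have hu1 : IsUnit (a + b) := IsUnit.of_mul_eq_one _ h1
  have hu2 : IsUnit (a - b) := IsUnit.of_mul_eq_one _ (by rwa [mul_comm] at h1)
  obtain ⟨r, hr⟩ := Polynomial.natDegree_eq_zero.mp (Polynomial.natDegree_eq_zero_of_isUnit hu1)
  obtain ⟨s, hs⟩ := Polynomial.natDegree_eq_zero.mp (Polynomial.natDegree_eq_zero_of_isUnit hu2)
  have hC2 : (Polynomial.C (2:ℝ)) ≠ 0 := Polynomial.C_ne_zero.mpr two_ne_zero
  have ha : a = Polynomial.C ((r + s) / 2) := by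
    apply mul_left_cancel₀ hC2
    rw [← Polynomial.C_mul]
    have h2 : (2:ℝ) * ((r + s) / 2) = r + s := by ring
    rw [h2, map_add, hr, hs, map_ofNat Polynomial.C 2]
    ring
  have hb : b = Polynomial.C ((r - s) / 2) := by
    apply mul_left_cancel₀ hC2
    rw [← Polynomial.C_mul]
    have h2 : (2:ℝ) * ((r - s) / 2) = r - s := by ring
    rw [h2, map_sub, hr, hs, map_ofNat Polynomial.C 2]
    ring
  constructor
  · conv_lhs => rw [ha]
    rw [ha]; simp
  · conv_lhs => rw [hb]
    rw [hb]; simp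

/-- The matrix `D = diag(-1, 1)` of size `2 × 2` over `ℝ`. -/
def D2 : Matrix (Fin 2) (Fin 2) ℝ :=
  Matrix.diagonal fun i => if i = 0 then -1 else 1

/-- Theorem 2, case ν = 2: a real polynomial `2 × 2` matrix with
`U(ω) D U(ω)ᵀ = D` identically in `ω` and `U(0) = I` is identically `I`. -/
theorem stmt10 (U : Matrix (Fin 2) (Fin 2) (Polynomial ℝ))
    (hU : U * D2.map Polynomial.C * Uᵀ = D2.map Polynomial.C)
    (hU0 : U.map (fun p => p.eval 0) = 1) :
    U = 1 := by
  have h00 := congrFun (congrFun hU 0) 0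
  have h11 := congrFun (congrFun hU 1) 1
  simp [Matrix.mul_apply, Fin.sum_univ_two, D2, Matrix.map_apply,
    Matrix.transpose_apply, Matrix.diagonal] at h00 h11
  have ea := const_of_sq_sub_sq (U 0 0) (U 0 1) (by linear_combination -h00)
  have ed := const_of_sq_sub_sq (U 1 1) (U 1 0) (by linear_combination h11)
  have e00 := congrFun (congrFun hU0 0) 0
  have e01 := congrFun (congrFun hU0 0) 1
  have e10 := congrFun (congrFun hU0 1) 0
  have e11 := congrFun (congrFun hU0 1) 1
  simp [Matrix.map_apply, Matrix.one_apply] at e00 e01 e10 e11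
  ext i j
  fin_cases i <;> fin_cases j <;>
    simp [Matrix.one_apply] <;>
    [ (rw [ea.1, e00]; simp);
      (rw [ea.2, e01]; simp);
      (rw [ed.2, e10]; simp);
      (rw [ed.1, e11]; simp) ]
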